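/- For every positive integer m, the limit as k → ∞ of (2k/(m+2)) · (1/k) · (1 + m/2 − (m/(2k^{2/m})) · ((a(k+1))^{1+2/m} − (a(k+1) − 1)^{1+2/m})) equals 1 − a^{2/m}, for any fixed a ∈ (0, 1]. -/

import Mathlib

open Filter Topology

/-- The rescaled Samworth rank-weight kernel `(2k/(m+2)) · f^k(a)` converges pointwise
to the Samworth kernel `1 - a^(2/m)` for every fixed `a ∈ (0,1]`. -/
theorem samworth_kernel_limit (m : ℕ) (hm : 0 < m) (a : ℝ) (ha : a ∈ Set.Ioc (0:ℝ) 1) :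
    Tendsto (fun k : ℕ =>
      (2 * (k : ℝ) / ((m : ℝ) + 2)) * ((1 / (k : ℝ)) *
        (1 + (m : ℝ) / 2 - ((m : ℝ) / (2 * (k : ℝ) ^ ((2 : ℝ) / (m : ℝ)))) *
          ((a * ((k : ℝ) + 1)) ^ (1 + (2 : ℝ) / (m : ℝ))
            - (a * ((k : ℝ) + 1) - 1) ^ (1 + (2 : ℝ) / (m : ℝ))))))
      atTop (𝓝 (1 - a ^ ((2 : ℝ) / (m : ℝ)))) := by
  obtain ⟨ha0, ha1⟩ := ha
  have hm0 : (0:ℝ) < m := by exact_mod_cast hm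
  set c : ℝ := 2 / (m:ℝ) with hc
  set p : ℝ := 1 + c with hp
  have hc0 : 0 < c := by positivity
  -- derivative of s ↦ (1-s)^p at 0 is -p
  have hderiv : HasDerivAt (fun s : ℝ => (1 - s) ^ p) (-p) 0 := by
    have h1 : HasDerivAt (fun x : ℝ => x ^ p) (p * (1:ℝ) ^ (p - 1)) ((fun s : ℝ => 1 - s) 0) := by
      simpa using Real.hasDerivAt_rpow_const (x := (1:ℝ)) (p := p) (Or.inl one_ne_zero)
    have h2 : HasDerivAt (fun s : ℝ => 1 - s) (-1) (0:ℝ) := by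
      simpa using (hasDerivAt_id (0:ℝ)).const_sub 1
    have h3 := h1.comp (0:ℝ) h2
    simpa [Function.comp_def, Real.one_rpow] using h3
  have hslope : Tendsto (fun s : ℝ => (1 - (1 - s) ^ p) / s) (𝓝[≠] 0) (𝓝 p) := by
    have h := hasDerivAt_iff_tendsto_slope.mp hderiv
    have h' : Tendsto (fun s : ℝ => -(((1 - s) ^ p - 1) / s)) (𝓝[≠] 0) (𝓝 p) := by
      have := h.neg
      rw [neg_neg] at this
      refine this.congr' ?_
      filter_upwards [self_mem_nhdsWithin] with s hs
      simp [slope, Real.one_rpow, div_eq_inv_mul]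
    exact h'.congr fun s => by ring
  -- s_k = 1/(a(k+1)) → 0 within ≠ 0
  have hk1 : Tendsto (fun k : ℕ => (k:ℝ) + 1) atTop atTop :=
    tendsto_atTop_add_const_right atTop 1 tendsto_natCast_atTop_atTop
  have htk : Tendsto (fun k : ℕ => a * ((k:ℝ) + 1)) atTop atTop :=
    hk1.const_mul_atTop ha0
  have hsk : Tendsto (fun k : ℕ => 1 / (a * ((k:ℝ) + 1))) atTop (𝓝[≠] 0) := by
    rw [tendsto_nhdsWithin_iff]
    constructor
    · exact htk.inv_tendsto_atTop.congr fun k => (one_div _).symm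
    · filter_upwards with k
      have h0 : 0 < a * ((k:ℝ) + 1) := by positivity
      simp only [Set.mem_compl_iff, Set.mem_singleton_iff]
      exact (one_div_pos.mpr h0).ne'
  have hG : Tendsto (fun k : ℕ =>
      (1 - (1 - 1 / (a * ((k:ℝ) + 1))) ^ p) / (1 / (a * ((k:ℝ) + 1)))) atTop (𝓝 p) :=
    hslope.comp hsk
  -- ((k+1)/k)^c → 1
  have hR : Tendsto (fun k : ℕ => (((k:ℝ) + 1) / k) ^ c) atTop (𝓝 1) := by
    have h1 : Tendsto (fun k : ℕ => ((k:ℝ) + 1) / k) atTop (𝓝 1) := by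
      have : Tendsto (fun k : ℕ => 1 + 1 / (k:ℝ)) atTop (𝓝 (1 + 0)) :=
        tendsto_const_nhds.add tendsto_one_div_atTop_nhds_zero_nat
      rw [add_zero] at this
      refine this.congr' ?_
      filter_upwards [eventually_gt_atTop 0] with k hk
      have hk0 : (k:ℝ) ≠ 0 := by positivity
      field_simp
    have h2 : Tendsto (fun x : ℝ => x ^ c) (𝓝 1) (𝓝 ((1:ℝ) ^ c)) :=
      (Real.continuousAt_rpow_const 1 c (Or.inl one_ne_zero)).tendsto
    simpa [Function.comp_def, Real.one_rpow] using h2.comp h1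
  have hMain : Tendsto (fun k : ℕ => 1 - ((m:ℝ) / ((m:ℝ) + 2)) *
      (a ^ c * ((((k:ℝ) + 1) / k) ^ c *
        ((1 - (1 - 1 / (a * ((k:ℝ) + 1))) ^ p) / (1 / (a * ((k:ℝ) + 1))))))) atTop
      (𝓝 (1 - a ^ c)) := by
    have h1 : Tendsto (fun k : ℕ => ((m:ℝ) / ((m:ℝ) + 2)) *
        (a ^ c * ((((k:ℝ) + 1) / k) ^ c *
          ((1 - (1 - 1 / (a * ((k:ℝ) + 1))) ^ p) / (1 / (a * ((k:ℝ) + 1))))))) atTop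
        (𝓝 (((m:ℝ) / ((m:ℝ) + 2)) * (a ^ c * (1 * p)))) :=
      (tendsto_const_nhds.mul (tendsto_const_nhds.mul (hR.mul hG)))
    have heq : ((m:ℝ) / ((m:ℝ) + 2)) * (a ^ c * (1 * p)) = a ^ c := by
      rw [hp, hc]
      field_simp
    rw [heq] at h1
    exact tendsto_const_nhds.sub h1
  refine hMain.congr' ?_
  filter_upwards [eventually_gt_atTop 0, htk.eventually_ge_atTop 2] with k hk hka
  have hk0 : (0:ℝ) < k := by exact_mod_cast hk
  set t : ℝ := a * ((k:ℝ) + 1) with hts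
  have ht1 : (1:ℝ) ≤ t := by linarith
  have ht0 : (0:ℝ) < t := by linarith
  have htm0 : (0:ℝ) ≤ t - 1 := by linarith
  -- rewrite (1 - 1/t)^p
  have e1 : (1 - 1 / t) ^ p = (t - 1) ^ p / t ^ p := by
    rw [show (1 - 1/t) = (t-1)/t by field_simp, Real.div_rpow htm0 ht0.le]
  have e2 : t ^ p = t * t ^ c := by
    rw [hp, Real.rpow_add ht0, Real.rpow_one]
  have e3 : t ^ c = a ^ c * ((k:ℝ) + 1) ^ c := Real.mul_rpow ha0.le (by positivity)
  have e4 : (((k:ℝ) + 1) / k) ^ c = ((k:ℝ) + 1) ^ c / (k:ℝ) ^ c :=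
    Real.div_rpow (x := (k:ℝ)+1) (by positivity) hk0.le c
  have hkc : (0:ℝ) < (k:ℝ) ^ c := Real.rpow_pos_of_pos hk0 c
  have hk1c : (0:ℝ) < ((k:ℝ)+1) ^ c := Real.rpow_pos_of_pos (by positivity) c
  have hac : (0:ℝ) < a ^ c := Real.rpow_pos_of_pos ha0 c
  have htc : (0:ℝ) < t ^ c := Real.rpow_pos_of_pos ht0 c
  -- final algebraic identity
  rw [e1, e4, e2, e3]
  field_simp
  ring
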